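/- For real symmetric positive semi-definite matrices A and B, tr((A^{1/2} B A^{1/2})^{1/2}) ≥ tr(B^{1/2} A^{1/2}). -/

import Mathlib

open Classical Matrix

/-- The positive semidefinite square root of a real matrix (junk value `0` if not PSD). -/
noncomputable def psdSqrt {n : ℕ} (A : Matrix (Fin n) (Fin n) ℝ) : Matrix (Fin n) (Fin n) ℝ :=
  if h : A.PosSemidef then
    (h.1.eigenvectorUnitary : Matrix (Fin n) (Fin n) ℝ) *
      diagonal ((↑) ∘ (√·) ∘ h.1.eigenvalues) *
      (star (h.1.eigenvectorUnitary : Matrix (Fin n) (Fin n) ℝ))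
  else 0

noncomputable def Matrix.PosSemidef.sqrt {n : ℕ} {A : Matrix (Fin n) (Fin n) ℝ}
    (h : A.PosSemidef) : Matrix (Fin n) (Fin n) ℝ :=
  (h.1.eigenvectorUnitary : Matrix (Fin n) (Fin n) ℝ) *
    diagonal ((↑) ∘ (√·) ∘ h.1.eigenvalues) *
    (star (h.1.eigenvectorUnitary : Matrix (Fin n) (Fin n) ℝ))

lemma Matrix.PosSemidef.posSemidef_sqrt {n : ℕ} {A : Matrix (Fin n) (Fin n) ℝ}
    (h : A.PosSemidef) : h.sqrt.PosSemidef := by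
  have hd : (diagonal ((↑) ∘ (√·) ∘ h.1.eigenvalues) : Matrix (Fin n) (Fin n) ℝ).PosSemidef :=
    posSemidef_diagonal_iff.mpr (fun i => by simp [Real.sqrt_nonneg])
  have := hd.mul_mul_conjTranspose_same (h.1.eigenvectorUnitary : Matrix (Fin n) (Fin n) ℝ)
  simpa [Matrix.PosSemidef.sqrt, star_eq_conjTranspose] using this

lemma Matrix.PosSemidef.sqrt_mul_self {n : ℕ} {A : Matrix (Fin n) (Fin n) ℝ}
    (h : A.PosSemidef) : h.sqrt * h.sqrt = A := by
  have hUU' : star (h.1.eigenvectorUnitary : Matrix (Fin n) (Fin n) ℝ) *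
      h.1.eigenvectorUnitary = 1 := (Matrix.mem_unitaryGroup_iff').mp h.1.eigenvectorUnitary.2
  have hsp := h.1.spectral_theorem
  rw [Unitary.conjStarAlgAut_apply] at hsp
  rw [Matrix.PosSemidef.sqrt]
  calc _ = (h.1.eigenvectorUnitary : Matrix (Fin n) (Fin n) ℝ) *
      (diagonal ((↑) ∘ (√·) ∘ h.1.eigenvalues) *
        (star (h.1.eigenvectorUnitary : Matrix (Fin n) (Fin n) ℝ) *
          (h.1.eigenvectorUnitary : Matrix (Fin n) (Fin n) ℝ)) *
        diagonal ((↑) ∘ (√·) ∘ h.1.eigenvalues)) *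
      (star (h.1.eigenvectorUnitary : Matrix (Fin n) (Fin n) ℝ)) := by
        simp only [Matrix.mul_assoc]
    _ = A := by
      rw [hUU', Matrix.mul_one, diagonal_mul_diagonal]
      conv_rhs => rw [hsp]
      congr 2
      congr 1
      funext i
      simp [Real.mul_self_sqrt (h.eigenvalues_nonneg i)]

lemma psdSqrt_congr {n : ℕ} {A B : Matrix (Fin n) (Fin n) ℝ} (h : A = B)
    (hA : A.PosSemidef) (hB : B.PosSemidef) : hA.sqrt = hB.sqrt := by subst h; rfl

/-- Key lemma: `tr X ≤ tr √(Xᵀ X)`. -/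
lemma trace_le_trace_sqrt {n : ℕ} (X : Matrix (Fin n) (Fin n) ℝ)
    (h : (Xᵀ * X).PosSemidef) : X.trace ≤ h.sqrt.trace := by
  have hH : (Xᵀ * X).IsHermitian := h.1
  set U : Matrix (Fin n) (Fin n) ℝ := (hH.eigenvectorUnitary : Matrix (Fin n) (Fin n) ℝ) with hU
  have hUU : U * star U = 1 := (Matrix.mem_unitaryGroup_iff).mp hH.eigenvectorUnitary.2
  have hUU' : star U * U = 1 := (Matrix.mem_unitaryGroup_iff').mp hH.eigenvectorUnitary.2
  -- trace of sqrt is the sum of square roots of eigenvalues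
  have htr_sqrt : h.sqrt.trace = ∑ i, Real.sqrt (hH.eigenvalues i) := by
    rw [Matrix.PosSemidef.sqrt, Matrix.trace_mul_cycle]
    rw [show star (hH.eigenvectorUnitary : Matrix (Fin n) (Fin n) ℝ) * hH.eigenvectorUnitary = 1 from hUU', Matrix.one_mul, Matrix.trace_diagonal]
    simp [RCLike.ofReal_real_eq_id]
  -- trace of X as a sum over the eigenbasis
  have htrX : X.trace = ∑ i, (⇑(hH.eigenvectorBasis i) : Fin n → ℝ) ⬝ᵥ
      (X *ᵥ ⇑(hH.eigenvectorBasis i)) := by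
    have : X.trace = (star U * X * U).trace := by
      rw [Matrix.trace_mul_cycle, hUU, Matrix.one_mul]
    rw [this]
    rw [Matrix.trace]
    apply Finset.sum_congr rfl
    intro i _
    simp only [Matrix.diag_apply, Matrix.mul_apply, Matrix.star_apply, dotProduct,
      Matrix.mulVec, star_trivial, hU, Matrix.IsHermitian.eigenvectorUnitary_apply,
      Finset.sum_mul, Finset.mul_sum, dotProduct]
    rw [Finset.sum_comm]
    apply Finset.sum_congr rfl
    intro j _
    apply Finset.sum_congr rfl
    intro k _
    ring
  rw [htrX, htr_sqrt]
  apply Finset.sum_le_sum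
  intro i _
  set v : Fin n → ℝ := ⇑(hH.eigenvectorBasis i) with hv
  have hnorm : ∑ j, v j * v j = 1 := by
    have h1 := orthonormal_iff_ite.mp hH.eigenvectorBasis.orthonormal i i
    simp only [if_true, eq_self_iff_true] at h1
    calc ∑ j, v j * v j = (inner ℝ (hH.eigenvectorBasis i) (hH.eigenvectorBasis i) : ℝ) := by
          simp only [v, PiLp.inner_apply, RCLike.inner_apply, conj_trivial]
      _ = 1 := by simpa using h1
  have heig : (Xᵀ * X) *ᵥ v = hH.eigenvalues i • v := hH.mulVec_eigenvectorBasis i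
  have hXv : ∑ j, (X *ᵥ v) j * (X *ᵥ v) j = hH.eigenvalues i := by
    have : (X *ᵥ v) ⬝ᵥ (X *ᵥ v) = ((Xᵀ * X) *ᵥ v) ⬝ᵥ v := by
      rw [dotProduct_mulVec, ← Matrix.mulVec_transpose, ← Matrix.mulVec_mulVec]
    rw [show (∑ j, (X *ᵥ v) j * (X *ᵥ v) j) = (X *ᵥ v) ⬝ᵥ (X *ᵥ v) from rfl, this, heig,
      smul_dotProduct, smul_eq_mul, show v ⬝ᵥ v = ∑ j, v j * v j from rfl, hnorm,
      mul_one]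
  calc v ⬝ᵥ (X *ᵥ v) = ∑ j, v j * (X *ᵥ v) j := rfl
    _ ≤ Real.sqrt (∑ j, v j ^ 2) * Real.sqrt (∑ j, (X *ᵥ v) j ^ 2) :=
        Real.sum_mul_le_sqrt_mul_sqrt _ _ _
    _ = Real.sqrt (hH.eigenvalues i) := by
        simp only [pow_two]
        rw [hnorm, hXv, Real.sqrt_one, one_mul]

/-- For real symmetric PSD matrices `A`, `B`:
`tr((A^{1/2} B A^{1/2})^{1/2}) ≥ tr(B^{1/2} A^{1/2})`. -/
theorem trace_sqrt_ge_trace_sqrt_mul_sqrt {n : ℕ}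
    (A B : Matrix (Fin n) (Fin n) ℝ) (hA : A.PosSemidef) (hB : B.PosSemidef) :
    (psdSqrt (psdSqrt A * B * psdSqrt A)).trace ≥ (psdSqrt B * psdSqrt A).trace := by
  have hsA : psdSqrt A = hA.sqrt := dif_pos hA
  have hsB : psdSqrt B = hB.sqrt := dif_pos hB
  set X : Matrix (Fin n) (Fin n) ℝ := hB.sqrt * hA.sqrt with hX
  have hXT : Xᵀ = hA.sqrt * hB.sqrt := by
    rw [hX, Matrix.transpose_mul,
      ← Matrix.conjTranspose_eq_transpose_of_trivial,
      ← Matrix.conjTranspose_eq_transpose_of_trivial,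
      hA.posSemidef_sqrt.isHermitian.eq, hB.posSemidef_sqrt.isHermitian.eq]
  have hM : psdSqrt A * B * psdSqrt A = Xᵀ * X := by
    rw [hsA, hXT, hX]
    rw [show hA.sqrt * hB.sqrt * (hB.sqrt * hA.sqrt)
        = hA.sqrt * (hB.sqrt * hB.sqrt) * hA.sqrt by noncomm_ring, hB.sqrt_mul_self]
  have hXXpsd : (Xᵀ * X).PosSemidef := Matrix.posSemidef_conjTranspose_mul_self X
  have hMpsd : (psdSqrt A * B * psdSqrt A).PosSemidef := hM ▸ hXXpsd
  rw [ge_iff_le, show psdSqrt (psdSqrt A * B * psdSqrt A) = hMpsd.sqrt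
    from dif_pos hMpsd, psdSqrt_congr hM hMpsd hXXpsd, hsB, hsA, ← hX]
  exact trace_le_trace_sqrt X hXXpsd
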